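/- Let (p^t,x^t)_{t≤T} be a dataset and m = (m^1,...,m^T) with m^t ≥ p^t·x^t for all t. Suppose that for every permutation σ with m^t ≥ p^t·x^{σ(t)} for all t we have ∑_t p^t·(x^t - x^{σ(t)}) ≤ 0. Then there exists a continuous and increasing utility function U: ℝ_+^L → ℝ such that U(x^t) - p^t·x^t ≥ U(x) - p^t·x for all t and all x ∈ ℝ_+^L with p^t·x ≤ m^t. -/

import Mathlib

open Matrix BigOperators

namespace CQRaux

variable {T : ℕ}

/-- Cost of a walk `[t, s, u, ...]`: `w s t + w u s + ...` (each step `a :: b :: _`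
contributes `w b a`, the weight of the edge from the second element to the first). -/
def chainCost (w : Fin T → Fin T → ℝ) : List (Fin T) → ℝ
  | a :: b :: rest => w b a + chainCost w (b :: rest)
  | _ => 0

@[simp] lemma chainCost_nil (w : Fin T → Fin T → ℝ) : chainCost w [] = 0 := rfl

@[simp] lemma chainCost_singleton (w : Fin T → Fin T → ℝ) (a : Fin T) :
    chainCost w [a] = 0 := rfl

@[simp] lemma chainCost_cons_cons (w : Fin T → Fin T → ℝ) (a b : Fin T) (l : List (Fin T)) :
    chainCost w (a :: b :: l) = w b a + chainCost w (b :: l) := rfl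

lemma chainCost_append (w : Fin T → Fin T → ℝ) (y : Fin T) (ys : List (Fin T)) :
    ∀ xs : List (Fin T),
      chainCost w (xs ++ y :: ys) = chainCost w (xs ++ [y]) + chainCost w (y :: ys)
  | [] => by simp
  | [a] => by simp
  | a :: b :: xs'' => by
    have ih := chainCost_append w y ys (b :: xs'')
    simp only [List.cons_append] at ih ⊢
    rw [chainCost_cons_cons, chainCost_cons_cons, ih]
    ring

lemma chainCost_concat (w : Fin T → Fin T → ℝ) (y : Fin T) :
    ∀ (l : List (Fin T)) (h : l ≠ []),
      chainCost w (l ++ [y]) = chainCost w l + w y (l.getLast h)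
  | [], h => absurd rfl h
  | [a], _ => by simp
  | a :: b :: l'', _ => by
    have ih := chainCost_concat w y (b :: l'') (List.cons_ne_nil _ _)
    simp only [List.cons_append] at ih ⊢
    rw [chainCost_cons_cons, chainCost_cons_cons, ih, List.getLast_cons (List.cons_ne_nil _ _)]
    ring

lemma sum_formPerm (w : Fin T → Fin T → ℝ) (hw0 : ∀ t, w t t = 0) :
    ∀ (l : List (Fin T)) (hne : l ≠ []), l.Nodup →
      ∑ t, w (l.formPerm t) t = chainCost w l + w (l.head hne) (l.getLast hne) := by
  intro l
  induction l with
  | nil => intro h; exact absurd rfl h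
  | cons a rest ih =>
    intro hne hnd
    cases rest with
    | nil => simp [hw0]
    | cons b rest' =>
      have hnd' : (b :: rest').Nodup := hnd.of_cons
      have ha : a ∉ b :: rest' := (List.nodup_cons.mp hnd).1
      set σ' := (b :: rest').formPerm with hσ'
      have hz : σ' ((b :: rest').getLast (List.cons_ne_nil _ _)) = b :=
        List.formPerm_apply_getLast b rest'
      set z := (b :: rest').getLast (List.cons_ne_nil _ _) with hzdef
      have hz_mem : z ∈ b :: rest' := List.getLast_mem _
      have haz : a ≠ z := fun h => ha (h ▸ hz_mem)
      have key : ∀ t, t ≠ a → t ≠ z →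
          w ((a :: b :: rest').formPerm t) t = w (σ' t) t := by
        intro t hta htz
        rw [List.formPerm_cons_cons, Equiv.Perm.mul_apply]
        congr 1
        apply Equiv.swap_apply_of_ne_of_ne
        · by_cases hmem : t ∈ b :: rest'
          · exact fun h => ha (h ▸ List.formPerm_apply_mem_of_mem hmem)
          · rw [List.formPerm_apply_of_notMem hmem]; exact hta
        · by_cases hmem : t ∈ b :: rest'
          · intro h
            exact htz (σ'.injective (h.trans hz.symm))
          · rw [List.formPerm_apply_of_notMem hmem]
            intro h; exact hmem (h ▸ (List.mem_cons_self : b ∈ b :: rest'))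
      have fa : w ((a :: b :: rest').formPerm a) a = w b a := by
        rw [List.formPerm_apply_head _ _ _ hnd]
      have fz : w ((a :: b :: rest').formPerm z) z = w a z := by
        rw [List.formPerm_cons_cons, Equiv.Perm.mul_apply, hz, Equiv.swap_apply_right]
      have ga : w (σ' a) a = 0 := by
        rw [List.formPerm_apply_of_notMem ha]; exact hw0 a
      have gz : w (σ' z) z = w b z := by rw [hz]
      have e1 : ∑ t ∈ ({a, z} : Finset (Fin T)),
            (w ((a :: b :: rest').formPerm t) t - w (σ' t) t)
          = ∑ t, (w ((a :: b :: rest').formPerm t) t - w (σ' t) t) := by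
        apply Finset.sum_subset (Finset.subset_univ _)
        intro t _ ht
        simp only [Finset.mem_insert, Finset.mem_singleton, not_or] at ht
        rw [key t ht.1 ht.2]; ring
      rw [Finset.sum_pair haz, fa, fz, ga, gz] at e1
      have e2 : ∑ t, (w ((a :: b :: rest').formPerm t) t - w (σ' t) t)
          = ∑ t, w ((a :: b :: rest').formPerm t) t - ∑ t, w (σ' t) t :=
        Finset.sum_sub_distrib _ _
      have ihs := ih (List.cons_ne_nil _ _) hnd'
      simp only [List.head_cons] at ihs
      rw [e2] at e1
      rw [chainCost_cons_cons, List.getLast_cons (List.cons_ne_nil b rest'),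
        List.head_cons]
      linarith [e1, ihs]

/-- The set of costs of duplicate-free walks starting at `t`. -/
def walkSet (w : Fin T → Fin T → ℝ) (t : Fin T) : Set ℝ :=
  chainCost w '' {l : List (Fin T) | l.Nodup ∧ l.head? = some t}

lemma walkSet_finite (w : Fin T → Fin T → ℝ) (t : Fin T) : (walkSet w t).Finite := by
  apply Set.Finite.image
  apply (List.finite_length_le (Fin T) T).subset
  intro l hl
  simpa using hl.1.length_le_card.trans (by simp)

lemma walkSet_nonempty (w : Fin T → Fin T → ℝ) (t : Fin T) : (walkSet w t).Nonempty :=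
  ⟨chainCost w [t], [t], ⟨List.nodup_singleton t, rfl⟩, rfl⟩

/-- Potential: minimal cost of a duplicate-free walk starting at `t`. -/
noncomputable def pot (w : Fin T → Fin T → ℝ) (t : Fin T) : ℝ := sInf (walkSet w t)

lemma pot_le (w : Fin T → Fin T → ℝ) {t : Fin T} {l : List (Fin T)}
    (hl : l.Nodup) (hh : l.head? = some t) : pot w t ≤ chainCost w l :=
  csInf_le (walkSet_finite w t).bddBelow ⟨l, ⟨hl, hh⟩, rfl⟩

lemma pot_nonpos (w : Fin T → Fin T → ℝ) (t : Fin T) : pot w t ≤ 0 := by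
  simpa using pot_le w (List.nodup_singleton t) (rfl : ([t] : List (Fin T)).head? = some t)

lemma pot_attained (w : Fin T → Fin T → ℝ) (t : Fin T) :
    ∃ l : List (Fin T), l.Nodup ∧ l.head? = some t ∧ chainCost w l = pot w t := by
  have := (walkSet_nonempty w t).csInf_mem (walkSet_finite w t)
  obtain ⟨l, ⟨h1, h2⟩, h3⟩ := this
  exact ⟨l, h1, h2, h3⟩

lemma pot_step (w : Fin T → Fin T → ℝ)
    (hcyc : ∀ (l : List (Fin T)) (h : l ≠ []), l.Nodup →
      0 ≤ chainCost w l + w (l.head h) (l.getLast h)) (s t : Fin T) :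
    pot w t ≤ w s t + pot w s := by
  obtain ⟨l, hnd, hh, hcost⟩ := pot_attained w s
  obtain ⟨tl, rfl⟩ : ∃ tl, l = s :: tl := by
    cases l with
    | nil => simp at hh
    | cons a tl =>
      have ha : a = s := by simpa using hh
      exact ⟨tl, by rw [ha]⟩
  by_cases ht : t ∈ s :: tl
  · obtain ⟨l1, l2, hsplit⟩ := List.append_of_mem ht
    have hnd2 : (l1 ++ t :: l2).Nodup := hsplit ▸ hnd
    have htl1 : t ∉ l1 := fun h =>
      (List.disjoint_of_nodup_append hnd2) h (List.mem_cons_self : t ∈ t :: l2)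
    have hndl1 : (t :: l1).Nodup := List.nodup_cons.mpr ⟨htl1, hnd2.of_append_left⟩
    have hndtl2 : (t :: l2).Nodup := hnd2.of_append_right
    have hcyc1 := hcyc (t :: l1) (List.cons_ne_nil _ _) hndl1
    have hsplit2 : (t :: (l1 ++ t :: l2)) = (t :: l1) ++ t :: l2 := by simp
    have e : chainCost w (t :: s :: tl)
        = chainCost w (t :: l1) + w t ((t :: l1).getLast (List.cons_ne_nil _ _))
          + chainCost w (t :: l2) := by
      rw [hsplit, hsplit2, chainCost_append w t l2 (t :: l1),
        chainCost_concat w t (t :: l1) (List.cons_ne_nil _ _)]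
    have h1 : pot w t ≤ chainCost w (t :: l2) :=
      pot_le w hndtl2 rfl
    have h2 : chainCost w (t :: s :: tl) = w s t + pot w s := by
      rw [chainCost_cons_cons, hcost]
    simp only [List.head_cons] at hcyc1
    linarith [h1, hcyc1, e, h2]
  · have : pot w t ≤ chainCost w (t :: s :: tl) :=
      pot_le w (List.nodup_cons.mpr ⟨ht, hnd⟩) rfl
    rw [chainCost_cons_cons, hcost] at this
    exact this

end CQRaux

/-- Lemma on constrained quasilinear rationalization over budgets `m`:
if no permutation that stays within the budgets `m` pumps money, then there is a
continuous and increasing utility function which constrained quasilinear rationalizes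
the data with respect to the budgets `m`. -/
theorem exists_constrained_quasilinear_rationalization
    {L T : ℕ} (p x : Fin T → Fin L → ℝ)
    (hp : ∀ t i, 0 < p t i) (hx : ∀ t i, 0 ≤ x t i)
    (m : Fin T → ℝ) (hm : ∀ t, p t ⬝ᵥ x t ≤ m t)
    (hnopump : ∀ σ : Equiv.Perm (Fin T), (∀ t, p t ⬝ᵥ x (σ t) ≤ m t) →
      ∑ t, (p t ⬝ᵥ x t - p t ⬝ᵥ x (σ t)) ≤ 0) :
    ∃ U : (Fin L → ℝ) → ℝ,
      ContinuousOn U {y : Fin L → ℝ | ∀ i, 0 ≤ y i} ∧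
      (∀ a b : Fin L → ℝ, (∀ i, 0 ≤ a i) → (∀ i, 0 ≤ b i) →
        (∀ i, a i ≤ b i) → U a ≤ U b) ∧
      (∀ a b : Fin L → ℝ, (∀ i, 0 ≤ a i) → (∀ i, 0 ≤ b i) →
        (∀ i, a i ≤ b i) → a ≠ b → U a < U b) ∧
      (∀ (t : Fin T) (y : Fin L → ℝ), (∀ i, 0 ≤ y i) → p t ⬝ᵥ y ≤ m t →
        U y - p t ⬝ᵥ y ≤ U (x t) - p t ⬝ᵥ x t) := by
  classical
  rcases Nat.eq_zero_or_pos T with rfl | hT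
  · refine ⟨fun y => ∑ i, y i, ?_, ?_, ?_, ?_⟩
    · exact (continuous_finset_sum _ fun i _ => continuous_apply i).continuousOn
    · intro a b _ _ hab; exact Finset.sum_le_sum fun i _ => hab i
    · intro a b _ _ hab hne
      obtain ⟨i0, hi0⟩ := Function.ne_iff.mp hne
      exact Finset.sum_lt_sum (fun i _ => hab i)
        ⟨i0, Finset.mem_univ _, lt_of_le_of_ne (hab i0) hi0⟩
    · intro t; exact t.elim0
  · haveI : Nonempty (Fin T) := Fin.pos_iff_nonempty.mp hT
    set A : ℝ := ∑ s : Fin T, ∑ t : Fin T, |p s ⬝ᵥ x t - p s ⬝ᵥ x s| with hA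
    have hA0 : 0 ≤ A :=
      Finset.sum_nonneg fun s _ => Finset.sum_nonneg fun t _ => abs_nonneg _
    set F : Finset (Fin T × Fin T) :=
      Finset.univ.filter (fun st => m st.1 < p st.1 ⬝ᵥ x st.2) with hF
    set S : Finset ℝ :=
      insert 1 (F.image (fun st => p st.1 ⬝ᵥ x st.2 - m st.1)) with hS
    have hSne : S.Nonempty := ⟨1, Finset.mem_insert_self _ _⟩
    set δ : ℝ := S.min' hSne with hδdef
    have hδ : 0 < δ := by
      rw [hδdef, Finset.lt_min'_iff]
      intro y hy
      rw [hS, Finset.mem_insert] at hy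
      rcases hy with rfl | hy
      · norm_num
      · obtain ⟨st, hst, rfl⟩ := Finset.mem_image.mp hy
        have := (Finset.mem_filter.mp hst).2
        linarith
    set β : ℝ := (A + 1) / δ with hβdef
    have hβ : 0 < β := div_pos (by linarith) hδ
    set g : Fin T → (Fin L → ℝ) → ℝ :=
      fun t y => p t ⬝ᵥ y - p t ⬝ᵥ x t + β * max 0 (p t ⬝ᵥ y - m t) with hg
    set w : Fin T → Fin T → ℝ := fun s t => g s (x t) with hw
    have hw0 : ∀ t, w t t = 0 := by
      intro t; simp only [hw, hg]
      rw [max_eq_left (sub_nonpos.mpr (hm t))]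
      ring
    have hperm : ∀ σ : Equiv.Perm (Fin T), 0 ≤ ∑ t, w t (σ t) := by
      intro σ
      by_cases hfeas : ∀ t, p t ⬝ᵥ x (σ t) ≤ m t
      · have h1 := hnopump σ hfeas
        have h2 : ∑ t, w t (σ t) = ∑ t, (p t ⬝ᵥ x (σ t) - p t ⬝ᵥ x t) := by
          apply Finset.sum_congr rfl
          intro t _
          simp only [hw, hg]
          rw [max_eq_left (sub_nonpos.mpr (hfeas t))]; ring
        have h3 : ∑ t, (p t ⬝ᵥ x (σ t) - p t ⬝ᵥ x t)
            = -∑ t, (p t ⬝ᵥ x t - p t ⬝ᵥ x (σ t)) := by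
          rw [← Finset.sum_neg_distrib]
          exact Finset.sum_congr rfl fun t _ => (neg_sub _ _).symm
        rw [h2, h3]; linarith
      · push_neg at hfeas
        obtain ⟨t0, ht0⟩ := hfeas
        have hδle : δ ≤ p t0 ⬝ᵥ x (σ t0) - m t0 := by
          have hmem : (t0, σ t0) ∈ F := Finset.mem_filter.mpr ⟨Finset.mem_univ _, ht0⟩
          rw [hδdef]
          exact Finset.min'_le _ _ (Finset.mem_insert_of_mem
            (Finset.mem_image_of_mem _ hmem))
        have hsplit : ∑ t, w t (σ t)
            = ∑ t, (p t ⬝ᵥ x (σ t) - p t ⬝ᵥ x t)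
              + β * ∑ t, max 0 (p t ⬝ᵥ x (σ t) - m t) := by
          rw [Finset.mul_sum, ← Finset.sum_add_distrib]
        have hlin : -A ≤ ∑ t, (p t ⬝ᵥ x (σ t) - p t ⬝ᵥ x t) := by
          rw [hA, ← Finset.sum_neg_distrib]
          apply Finset.sum_le_sum
          intro t _
          have h1 : |p t ⬝ᵥ x (σ t) - p t ⬝ᵥ x t| ≤ ∑ s : Fin T, |p t ⬝ᵥ x s - p t ⬝ᵥ x t| :=
            Finset.single_le_sum (f := fun s => |p t ⬝ᵥ x s - p t ⬝ᵥ x t|)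
              (fun s _ => abs_nonneg _) (Finset.mem_univ (σ t))
          have h2 := neg_abs_le (p t ⬝ᵥ x (σ t) - p t ⬝ᵥ x t)
          linarith
        have hmax : δ ≤ ∑ t, max 0 (p t ⬝ᵥ x (σ t) - m t) := by
          calc δ ≤ max 0 (p t0 ⬝ᵥ x (σ t0) - m t0) := le_trans hδle (le_max_right _ _)
          _ ≤ ∑ t, max 0 (p t ⬝ᵥ x (σ t) - m t) :=
            Finset.single_le_sum (f := fun t => max 0 (p t ⬝ᵥ x (σ t) - m t))
              (fun t _ => le_max_left _ _) (Finset.mem_univ t0)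
        have hβδ : β * δ = A + 1 := div_mul_cancel₀ _ hδ.ne'
        have hmul : β * δ ≤ β * ∑ t, max 0 (p t ⬝ᵥ x (σ t) - m t) :=
          mul_le_mul_of_nonneg_left hmax hβ.le
        rw [hsplit]; linarith
    have hcyc : ∀ (l : List (Fin T)) (h : l ≠ []), l.Nodup →
        0 ≤ CQRaux.chainCost w l + w (l.head h) (l.getLast h) := by
      intro l h hnd
      rw [← CQRaux.sum_formPerm w hw0 l h hnd]
      calc (0:ℝ) ≤ ∑ t, w t ((l.formPerm)⁻¹ t) := hperm _
        _ = ∑ t, w (l.formPerm t) t := by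
          rw [← Equiv.sum_comp l.formPerm (fun s => w s ((l.formPerm)⁻¹ s))]
          simp
    set c : Fin T → ℝ := CQRaux.pot w with hc
    have hstep : ∀ s t, c t ≤ w s t + c s := fun s t => CQRaux.pot_step w hcyc s t
    set U : (Fin L → ℝ) → ℝ :=
      fun y => Finset.univ.inf' Finset.univ_nonempty (fun t => g t y + c t) with hU
    have hdot : ∀ t : Fin T, Continuous fun y : Fin L → ℝ => p t ⬝ᵥ y := by
      intro t
      exact continuous_finset_sum _ fun i _ => continuous_const.mul (continuous_apply i)
    have hgcont : ∀ t, Continuous fun y => g t y + c t := by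
      intro t
      apply Continuous.add _ continuous_const
      simp only [hg]
      exact (((hdot t).sub continuous_const).add
        (continuous_const.mul (continuous_const.max ((hdot t).sub continuous_const))))
    have hUcont : Continuous U := by
      rw [continuous_iff_continuousAt]
      intro y
      exact Filter.Tendsto.finset_inf'_nhds_apply Finset.univ_nonempty fun t _ => ((hgcont t).tendsto y)
    have hgmono : ∀ (t : Fin T) (a b : Fin L → ℝ), (∀ i, a i ≤ b i) → g t a ≤ g t b := by
      intro t a b hab
      have h1 : p t ⬝ᵥ a ≤ p t ⬝ᵥ b :=
        Finset.sum_le_sum fun i _ => mul_le_mul_of_nonneg_left (hab i) (hp t i).le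
      have h2 : max 0 (p t ⬝ᵥ a - m t) ≤ max 0 (p t ⬝ᵥ b - m t) :=
        max_le_max le_rfl (by linarith)
      have h3 := mul_le_mul_of_nonneg_left h2 hβ.le
      simp only [hg]; linarith
    have hglt : ∀ (t : Fin T) (a b : Fin L → ℝ), (∀ i, a i ≤ b i) → a ≠ b →
        g t a < g t b := by
      intro t a b hab hne
      obtain ⟨i0, hi0⟩ := Function.ne_iff.mp hne
      have h1 : p t ⬝ᵥ a < p t ⬝ᵥ b :=
        Finset.sum_lt_sum (fun i _ => mul_le_mul_of_nonneg_left (hab i) (hp t i).le)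
          ⟨i0, Finset.mem_univ _,
            mul_lt_mul_of_pos_left (lt_of_le_of_ne (hab i0) hi0) (hp t i0)⟩
      have h2 : max 0 (p t ⬝ᵥ a - m t) ≤ max 0 (p t ⬝ᵥ b - m t) :=
        max_le_max le_rfl (by linarith)
      have h3 := mul_le_mul_of_nonneg_left h2 hβ.le
      simp only [hg]; linarith
    refine ⟨U, hUcont.continuousOn, ?_, ?_, ?_⟩
    · intro a b _ _ hab
      obtain ⟨t1, _, h1⟩ := Finset.exists_mem_eq_inf' Finset.univ_nonempty
        (fun t => g t b + c t)
      calc U a ≤ g t1 a + c t1 := Finset.inf'_le _ (Finset.mem_univ t1)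
        _ ≤ g t1 b + c t1 := by linarith [hgmono t1 a b hab]
        _ = U b := h1.symm
    · intro a b _ _ hab hne
      obtain ⟨t1, _, h1⟩ := Finset.exists_mem_eq_inf' Finset.univ_nonempty
        (fun t => g t b + c t)
      calc U a ≤ g t1 a + c t1 := Finset.inf'_le _ (Finset.mem_univ t1)
        _ < g t1 b + c t1 := by linarith [hglt t1 a b hab hne]
        _ = U b := h1.symm
    · intro t y _ hby
      have h1 : U y ≤ g t y + c t := Finset.inf'_le _ (Finset.mem_univ t)
      have h2 : g t y = p t ⬝ᵥ y - p t ⬝ᵥ x t := by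
        simp only [hg]; rw [max_eq_left (sub_nonpos.mpr hby)]; ring
      have h3 : c t ≤ U (x t) := by
        apply Finset.le_inf'
        intro s _
        exact hstep s t
      linarith
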